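/- For every timelike vector V (i.e. g(V,V) < 0), the vector P_ν = V^α τ_{αν} obtained by contracting V with the Maxwell stress-energy tensor is non-spacelike: P_α P^α ≤ 0. -/
import Mathlib


open Finset

/-- The Minkowski metric of signature (−,+,+,+) on ℝ⁴ (orthonormal coordinates). -/
noncomputable def eta : Matrix (Fin 4) (Fin 4) ℝ :=
  Matrix.diagonal (fun i => if i = 0 then -1 else 1)

/-- Maxwell stress-energy tensor τ_{αβ}. -/
noncomputable def tauEM (F : Matrix (Fin 4) (Fin 4) ℝ) : Matrix (Fin 4) (Fin 4) ℝ :=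
  fun α β => (∑ γ, ∑ δ, F α γ * eta γ δ * F β δ)
    - (1/4) * eta α β *
      (∑ γ, ∑ δ, ∑ γ', ∑ δ', eta γ γ' * eta δ δ' * F γ' δ' * F γ δ)

set_option maxHeartbeats 4000000 in
/-- For any timelike vector V, the covector P_ν = V^α τ_{αν} is non-spacelike. -/
theorem tau_contract_timelike_nonspacelike (F : Matrix (Fin 4) (Fin 4) ℝ)
    (hF : ∀ α β, F α β = - F β α) (V : Fin 4 → ℝ)
    (hV : ∑ α, ∑ β, eta α β * V α * V β < 0) :
    ∑ ν, ∑ ν', eta ν ν' * (∑ α, V α * tauEM F α ν) * (∑ β, V β * tauEM F β ν') ≤ 0 := by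
  have h00 : F 0 0 = 0 := by have := hF 0 0; linarith
  have h11 : F 1 1 = 0 := by have := hF 1 1; linarith
  have h22 : F 2 2 = 0 := by have := hF 2 2; linarith
  have h33 : F 3 3 = 0 := by have := hF 3 3; linarith
  have key : ∑ ν, ∑ ν', eta ν ν' * (∑ α, V α * tauEM F α ν) * (∑ β, V β * tauEM F β ν')
      = (1/4) * ((F 0 1^2 + F 0 2^2 + F 0 3^2 - F 1 2^2 - F 1 3^2 - F 2 3^2)^2
          + 4*(F 0 1 * F 2 3 - F 0 2 * F 1 3 + F 0 3 * F 1 2)^2)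
        * (∑ α, ∑ β, eta α β * V α * V β) := by
    simp only [tauEM, eta, Matrix.diagonal_apply, Fin.sum_univ_four, Fin.isValue,
      Fin.reduceEq, if_true, if_false, reduceIte, one_mul, mul_one, neg_mul, mul_neg,
      neg_neg, mul_zero, zero_mul, add_zero, zero_add,
      hF 1 0, hF 2 0, hF 3 0, hF 2 1, hF 3 1, hF 3 2, h00, h11, h22, h33]
    ring
  rw [key]
  have hS : 0 ≤ (F 0 1^2 + F 0 2^2 + F 0 3^2 - F 1 2^2 - F 1 3^2 - F 2 3^2)^2
          + 4*(F 0 1 * F 2 3 - F 0 2 * F 1 3 + F 0 3 * F 1 2)^2 := by positivity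
  nlinarith [hS, hV]
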